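/- Every ordinal coarse space is λ-strong: if (X, E) has a base for E linearly ordered by inclusion, and E' is any coarse structure on X that is λ-equivalent to E, then E' ⊆ E. -/

import Mathlib

open Set

/-- A coarse structure (ballean) on a set `X`. -/
structure CoarseStruct (X : Type*) where
  sets : Set (Set (X × X))
  diagonal_mem : Set.diagonal X ∈ sets
  diagonal_subset : ∀ E ∈ sets, Set.diagonal X ⊆ E
  comp_mem : ∀ E ∈ sets, ∀ F ∈ sets,
    {p : X × X | ∃ z, (p.1, z) ∈ E ∧ (z, p.2) ∈ F} ∈ sets
  inv_mem : ∀ E ∈ sets, {p : X × X | (p.2, p.1) ∈ E} ∈ sets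
  subset_mem : ∀ E ∈ sets, ∀ E' : Set (X × X),
    Set.diagonal X ⊆ E' → E' ⊆ E → E' ∈ sets
  cover : ∀ p : X × X, ∃ E ∈ sets, p ∈ E

namespace CoarseStruct

variable {X : Type*}

/-- The ball `E[A]` of radius `E` around `A`. -/
def ball (E : Set (X × X)) (A : Set X) : Set X := {y | ∃ a ∈ A, (a, y) ∈ E}

/-- A set is bounded if it is contained in a ball around a point. -/
def IsBounded (C : CoarseStruct X) (B : Set X) : Prop :=
  ∃ E ∈ C.sets, ∃ x : X, B ⊆ ball E {x}

/-- Closeness: `A δ B`. -/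
def Close (C : CoarseStruct X) (A B : Set X) : Prop :=
  ∃ E ∈ C.sets, A ⊆ ball E B ∧ B ⊆ ball E A

/-- Linkness: `A λ B`. -/
def Linked (C : CoarseStruct X) (A B : Set X) : Prop :=
  (C.IsBounded A ∧ C.IsBounded B) ∨
  ∃ A' B' : Set X, A' ⊆ A ∧ B' ⊆ B ∧ ¬C.IsBounded A' ∧ ¬C.IsBounded B' ∧ C.Close A' B'

def LambdaEquiv (C C' : CoarseStruct X) : Prop :=
  ∀ A B : Set X, C.Linked A B ↔ C'.Linked A B

def DeltaEquiv (C C' : CoarseStruct X) : Prop :=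
  ∀ A B : Set X, C.Close A B ↔ C'.Close A B

def Discrete (C : CoarseStruct X) : Prop :=
  ∀ E ∈ C.sets, ∃ B : Set X, C.IsBounded B ∧ ∀ x ∉ B, ball E {x} = {x}

def Large (C : CoarseStruct X) (Y : Set X) : Prop :=
  ∃ E ∈ C.sets, ball E Y = Set.univ

/-- The subballean on `Y` is discrete. -/
def DiscreteOn (C : CoarseStruct X) (Y : Set X) : Prop :=
  ∀ E ∈ C.sets, ∃ B : Set X, C.IsBounded B ∧ ∀ y ∈ Y \ B, ball E {y} ∩ Y = {y}

def CoarselyDiscrete (C : CoarseStruct X) : Prop :=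
  ∃ Y : Set X, C.Large Y ∧ C.DiscreteOn Y

def LambdaRigid (C : CoarseStruct X) : Prop :=
  ∀ C' : CoarseStruct X, LambdaEquiv C C' → C' = C

def DeltaRigid (C : CoarseStruct X) : Prop :=
  ∀ C' : CoarseStruct X, DeltaEquiv C C' → C' = C

def IsBase (C : CoarseStruct X) (B : Set (Set (X × X))) : Prop :=
  B ⊆ C.sets ∧ ∀ E ∈ C.sets, ∃ E' ∈ B, E ⊆ E'

/-- Metrizable: the coarse structure has a countable base. -/
def Metrizable (C : CoarseStruct X) : Prop :=
  ∃ B : Set (Set (X × X)), B.Countable ∧ C.IsBase B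

/-- Ordinal: the coarse structure has a base linearly ordered by inclusion. -/
def Ordinal (C : CoarseStruct X) : Prop :=
  ∃ B : Set (Set (X × X)), C.IsBase B ∧ IsChain (· ⊆ ·) B

def MacroUniform (C : CoarseStruct X) (f : X → ℝ) : Prop :=
  ∀ E ∈ C.sets, ∃ r : ℝ, 0 < r ∧
    ∀ x : X, ∀ y ∈ ball E {x}, ∀ z ∈ ball E {x}, |f y - f z| ≤ r

def Submetrizable (C : CoarseStruct X) : Prop :=
  ¬C.IsBounded Set.univ ∧ ∃ C'' : CoarseStruct X,
    C.sets ⊆ C''.sets ∧ ¬C''.IsBounded Set.univ ∧ C''.Metrizable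

def SlowlyOscillating (C : CoarseStruct X) (f : X → ℝ) : Prop :=
  ∀ E ∈ C.sets, ∀ ε : ℝ, 0 < ε → ∃ B : Set X, C.IsBounded B ∧
    ∀ x ∉ B, ∀ y ∈ ball E {x}, ∀ z ∈ ball E {x}, |f y - f z| < ε

/-- The entourage `H_{(E,Φ)}`: `H[x] = {x}` for `x ∈ Φ` and `H[x] = E[x] \ Φ` for `x ∉ Φ`. -/
def EPhiBase (E : Set (X × X)) (Φ : Set X) : Set (X × X) :=
  {p | (p.1 ∈ Φ ∧ p.1 = p.2) ∨ (p.1 ∉ Φ ∧ p.2 ∉ Φ ∧ (p.1, p.2) ∈ E)}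

/-- The family of entourages of the coarse structure `E_φ` with base `{H_{(E,Φ)}}`. -/
def EPhiSets (C : CoarseStruct X) (φ : Filter X) : Set (Set (X × X)) :=
  {E' | Set.diagonal X ⊆ E' ∧ ∃ E ∈ C.sets, ∃ Φ ∈ φ, E' ⊆ EPhiBase E Φ}

/-- The set `B♯` of ultrafilters containing the complement of every bounded set. -/
def Bsharp (C : CoarseStruct X) : Set (Ultrafilter X) :=
  {p | ∀ B : Set X, C.IsBounded B → Bᶜ ∈ p}

/-- Parallelity of ultrafilters: `p ∥ q`. -/
def Parallel (C : CoarseStruct X) (p q : Ultrafilter X) : Prop :=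
  ∃ E ∈ C.sets, ∀ P ∈ p, ball E P ∈ q

def AsympDisjoint (C : CoarseStruct X) (A B : Set X) : Prop :=
  ∀ E ∈ C.sets, C.IsBounded (ball E A ∩ ball E B)

def AsympNbhd (C : CoarseStruct X) (A U : Set X) : Prop :=
  ∀ E ∈ C.sets, C.IsBounded (ball E A \ U)

def Normal (C : CoarseStruct X) : Prop :=
  ∀ A B : Set X, C.AsympDisjoint A B →
    ∃ U V : Set X, C.AsympNbhd A U ∧ C.AsympNbhd B V ∧ Disjoint U V

end CoarseStruct


section Aux

open CoarseStruct hiding Ordinal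
open Cardinal Order

universe u

variable {X : Type u}

theorem cs_ball_mono_ent {E F : Set (X × X)} (h : E ⊆ F) (A : Set X) :
    ball E A ⊆ ball F A := fun y ⟨a, ha, hae⟩ => ⟨a, ha, h hae⟩

theorem cs_union_mem (C : CoarseStruct X) {E F : Set (X × X)}
    (hE : E ∈ C.sets) (hF : F ∈ C.sets) : E ∪ F ∈ C.sets := by
  refine C.subset_mem _ (C.comp_mem E hE F hF) (E ∪ F) ?_ ?_
  · intro p hp
    exact Or.inl (C.diagonal_subset E hE hp)
  · rintro ⟨x, y⟩ (h | h)
    · exact ⟨y, h, C.diagonal_subset F hF rfl⟩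
    · exact ⟨x, C.diagonal_subset E hE rfl, h⟩

theorem cs_bounded_subset (C : CoarseStruct X) {A B : Set X}
    (h : C.IsBounded B) (hs : A ⊆ B) : C.IsBounded A := by
  obtain ⟨E, hE, x, hx⟩ := h
  exact ⟨E, hE, x, hs.trans hx⟩

theorem cs_bounded_empty (C : CoarseStruct X) [Nonempty X] : C.IsBounded ∅ :=
  ⟨_, C.diagonal_mem, Classical.arbitrary X, by simp⟩

theorem cs_bounded_ball (C : CoarseStruct X) {A : Set X} {E : Set (X × X)}
    (hA : C.IsBounded A) (hE : E ∈ C.sets) : C.IsBounded (ball E A) := by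
  obtain ⟨E1, hE1, x, hx⟩ := hA
  refine ⟨_, C.comp_mem E1 hE1 E hE, x, ?_⟩
  rintro y ⟨a, ha, hae⟩
  obtain ⟨z, hz, hza⟩ := hx ha
  rcases hz with rfl
  exact ⟨z, rfl, ⟨a, hza, hae⟩⟩

theorem cs_linked_empty_iff (C : CoarseStruct X) [Nonempty X] {A : Set X} :
    C.Linked A ∅ ↔ C.IsBounded A := by
  constructor
  · rintro (⟨hA, -⟩ | ⟨A', B', -, hB', -, hB'unb, -⟩)
    · exact hA
    · exact absurd (cs_bounded_subset C (cs_bounded_empty C) hB') hB'unb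
  · intro hA
    exact Or.inl ⟨hA, cs_bounded_empty C⟩

theorem cs_bounded_congr {C C' : CoarseStruct X} [Nonempty X]
    (h : LambdaEquiv C C') (A : Set X) : C.IsBounded A ↔ C'.IsBounded A :=
  (cs_linked_empty_iff C).symm.trans ((h A ∅).trans (cs_linked_empty_iff C'))

theorem cs_symm_union_mem (C : CoarseStruct X) {E : Set (X × X)} (hE : E ∈ C.sets) :
    E ∪ {p : X × X | (p.2, p.1) ∈ E} ∈ C.sets := by
  refine C.subset_mem _ (C.comp_mem _ (C.inv_mem E hE) E hE) _ ?_ ?_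
  · intro p hp
    exact Or.inl (C.diagonal_subset E hE hp)
  · rintro ⟨x, y⟩ (h | h)
    · exact ⟨x, C.diagonal_subset E hE rfl, h⟩
    · exact ⟨y, h, C.diagonal_subset E hE rfl⟩

theorem cs_ball_singleton {E : Set (X × X)} {x y : X} (h : y ∈ ball E {x}) : (x, y) ∈ E := by
  obtain ⟨a, ha, hae⟩ := h
  rw [Set.mem_singleton_iff] at ha
  subst ha
  exact hae

open Classical in
/-- Transfinite sequence running up a chain of sets, strictly increasing as long as possible. -/
noncomputable def chainSeq (B0 : Set (Set (X × X))) : Ordinal.{u} → Set (X × X) :=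
  WellFounded.fix Ordinal.lt_wf fun ξ ih =>
    if h : ∃ G ∈ B0, ∀ η (hη : η < ξ), ih η hη ⊂ G then h.choose else ∅

open Classical in
theorem chainSeq_def (B0 : Set (Set (X × X))) (ξ : Ordinal.{u}) :
    chainSeq B0 ξ =
      if h : ∃ G ∈ B0, ∀ η (_ : η < ξ), chainSeq B0 η ⊂ G then h.choose else ∅ := by
  unfold chainSeq
  rw [WellFounded.fix_eq]

open Classical in
theorem exists_stall (B0 : Set (Set (X × X))) :
    ∃ ξ : Ordinal.{u}, ¬ ∃ G ∈ B0, ∀ η (_ : η < ξ), chainSeq B0 η ⊂ G := by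
  by_contra hcon
  push_neg at hcon
  have hmono : ∀ {η ξ : Ordinal.{u}}, η < ξ → chainSeq B0 η ⊂ chainSeq B0 ξ := by
    intro η ξ hlt
    have h := hcon ξ
    rw [chainSeq_def B0 ξ, dif_pos h]
    exact h.choose_spec.2 η hlt
  set c := Order.succ (#(Set (X × X)))
  set θ := c.ord with hθ
  have hinj : Function.Injective
      (fun x : Set.Iio θ => ULift.up.{u+1} (chainSeq B0 x.1)) := by
    rintro ⟨x, hx⟩ ⟨y, hy⟩ hxy
    have hxy' : chainSeq B0 x = chainSeq B0 y := congrArg ULift.down hxy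
    rcases lt_trichotomy x y with hl | he | hl
    · exact absurd hxy' (hmono hl).ne
    · exact Subtype.ext he
    · exact absurd hxy'.symm (hmono hl).ne
  have hle := Cardinal.mk_le_of_injective hinj
  rw [Ordinal.mk_Iio_ordinal, Cardinal.mk_uLift, hθ, Cardinal.card_ord,
    Cardinal.lift_le] at hle
  exact (Order.lt_succ (#(Set (X × X)))).not_ge hle

/-- The set of points appearing in the pairs `q η` for `η < ξ`. -/
def pts (q : Ordinal.{u} → X × X) (ξ : Ordinal.{u}) : Set X :=
  {z | ∃ η, ∃ _ : η < ξ, z = (q η).1 ∨ z = (q η).2}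

open Classical in
/-- Transfinite sequence of pairs of `F'` escaping the coarse structure along `e`. -/
noncomputable def pairSeq [Nonempty X] (F' : Set (X × X))
    (e : Ordinal.{u} → Set (X × X)) : Ordinal.{u} → X × X :=
  WellFounded.fix Ordinal.lt_wf fun ξ ih =>
    if h : ∃ p : X × X, p ∈ F' ∧ p ∉ e ξ ∧
        p.1 ∉ ball (e ξ) {z | ∃ η, ∃ hη : η < ξ, z = (ih η hη).1 ∨ z = (ih η hη).2} ∧
        p.2 ∉ ball (e ξ) {z | ∃ η, ∃ hη : η < ξ, z = (ih η hη).1 ∨ z = (ih η hη).2}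
    then h.choose else Classical.arbitrary (X × X)

open Classical in
theorem pairSeq_spec [Nonempty X] (F' : Set (X × X)) (e : Ordinal.{u} → Set (X × X))
    (ξ : Ordinal.{u})
    (h : ∃ p : X × X, p ∈ F' ∧ p ∉ e ξ ∧
        p.1 ∉ ball (e ξ) (pts (pairSeq F' e) ξ) ∧
        p.2 ∉ ball (e ξ) (pts (pairSeq F' e) ξ)) :
    pairSeq F' e ξ ∈ F' ∧ pairSeq F' e ξ ∉ e ξ ∧
      (pairSeq F' e ξ).1 ∉ ball (e ξ) (pts (pairSeq F' e) ξ) ∧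
      (pairSeq F' e ξ).2 ∉ ball (e ξ) (pts (pairSeq F' e) ξ) := by
  have heq : pairSeq F' e ξ =
      if h' : ∃ p : X × X, p ∈ F' ∧ p ∉ e ξ ∧
        p.1 ∉ ball (e ξ) (pts (pairSeq F' e) ξ) ∧
        p.2 ∉ ball (e ξ) (pts (pairSeq F' e) ξ)
      then h'.choose else Classical.arbitrary (X × X) := by
    unfold pairSeq
    rw [WellFounded.fix_eq]
    rfl
  rw [heq, dif_pos h]
  exact h.choose_spec

end Aux

/-- Every ordinal coarse space is λ-strong: any λ-equivalent coarse structure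
is contained in it. -/
theorem ordinal_lambdaStrong {X : Type*} (C : CoarseStruct X)
    (h : C.Ordinal) :
    ∀ C' : CoarseStruct X, CoarseStruct.LambdaEquiv C C' → C'.sets ⊆ C.sets := by
  classical
  intro C' hEq E' hE'
  by_cases hX : IsEmpty X
  · refine C.subset_mem _ C.diagonal_mem E' (C'.diagonal_subset E' hE') ?_
    intro p _
    exact (hX.false p.1).elim
  haveI : Nonempty X := not_isEmpty_iff.mp hX
  by_contra hE'C
  -- pass to the symmetrization `F'` of `E'`
  set F' : Set (X × X) := E' ∪ {p : X × X | (p.2, p.1) ∈ E'} with hF'def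
  have hF'C' : F' ∈ C'.sets := cs_symm_union_mem C' hE'
  have hdiagF' : Set.diagonal X ⊆ F' := fun p hp => Or.inl (C'.diagonal_subset E' hE' hp)
  have hF'sym : ∀ p : X × X, p ∈ F' → (p.2, p.1) ∈ F' := by
    rintro ⟨x, y⟩ (hp | hp)
    · exact Or.inr hp
    · exact Or.inl hp
  have hF'nC : F' ∉ C.sets := fun hmem =>
    hE'C (C.subset_mem F' hmem E' (C'.diagonal_subset E' hE') Set.subset_union_left)
  have hcb : ∀ A : Set X, C.IsBounded A ↔ C'.IsBounded A := cs_bounded_congr hEq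
  -- the whole space cannot be bounded
  have hub : ¬ C.IsBounded Set.univ := by
    rintro ⟨G, hG, x, hx⟩
    refine hF'nC (C.subset_mem _ (C.comp_mem _ (C.inv_mem G hG) G hG) F' hdiagF' ?_)
    rintro ⟨a, b⟩ -
    exact ⟨x, show (x, a) ∈ G from cs_ball_singleton (hx (Set.mem_univ a)),
      cs_ball_singleton (hx (Set.mem_univ b))⟩
  by_cases hconc : ∃ D : Set X, C.IsBounded D ∧ ∃ E₀ ∈ C.sets,
      ∀ p ∈ F', p.1 ∈ D ∨ p.2 ∈ D ∨ p ∈ E₀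
  · obtain ⟨D, hD, E₀, hE₀, hcover⟩ := hconc
    obtain ⟨G, hG, x, hxD⟩ := (hcb D).mp hD
    have hGF : {p : X × X | ∃ z, (p.1, z) ∈ G ∧ (z, p.2) ∈ F'} ∈ C'.sets :=
      C'.comp_mem G hG F' hF'C'
    set T := CoarseStruct.ball {p : X × X | ∃ z, (p.1, z) ∈ G ∧ (z, p.2) ∈ F'} {x}
      with hTdef
    have hTC : C.IsBounded T := (hcb T).mpr ⟨_, hGF, x, subset_rfl⟩
    obtain ⟨H, hH, y, hyT⟩ := hTC
    have hmemT : ∀ p : X × X, p ∈ F' → p.1 ∈ D → p.1 ∈ T ∧ p.2 ∈ T := by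
      rintro ⟨a, b⟩ hpF haD
      have hxa : (x, a) ∈ G := cs_ball_singleton (hxD haD)
      constructor
      · exact ⟨x, rfl, a, hxa, hdiagF' rfl⟩
      · exact ⟨x, rfl, a, hxa, hpF⟩
    refine hF'nC (C.subset_mem _
      (cs_union_mem C hE₀ (C.comp_mem _ (C.inv_mem H hH) H hH)) F' hdiagF' ?_)
    intro p hp
    rcases hcover p hp with hD1 | hD2 | hE
    · obtain ⟨h1, h2⟩ := hmemT p hp hD1
      exact Or.inr ⟨y, show (y, p.1) ∈ H from cs_ball_singleton (hyT h1),
        cs_ball_singleton (hyT h2)⟩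
    · obtain ⟨h1, h2⟩ := hmemT (p.2, p.1) (hF'sym p hp) hD2
      exact Or.inr ⟨y, show (y, p.1) ∈ H from cs_ball_singleton (hyT h2),
        cs_ball_singleton (hyT h1)⟩
    · exact Or.inl hE
  push_neg at hconc
  -- set up the chain base
  obtain ⟨B0, ⟨hB0sub, hB0base⟩, hB0chain⟩ := h
  have hB0ne : B0.Nonempty := by
    obtain ⟨F, hF, -⟩ := hB0base _ C.diagonal_mem
    exact ⟨F, hF⟩
  have hnotop : ∀ F ∈ B0, ∃ G ∈ B0, ¬ G ⊆ F := by
    by_contra hh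
    push_neg at hh
    obtain ⟨F, hF, hall⟩ := hh
    have hFuniv : F = Set.univ := by
      apply Set.eq_univ_of_forall
      intro p
      obtain ⟨E, hE, hpE⟩ := C.cover p
      obtain ⟨G, hG, hEG⟩ := hB0base E hE
      exact hall G hG (hEG hpE)
    apply hub
    refine ⟨F, hB0sub hF, Classical.arbitrary X, ?_⟩
    intro z _
    exact ⟨Classical.arbitrary X, rfl, by rw [hFuniv]; trivial⟩
  -- the stall ordinal of the transfinite enumeration of the chain
  set S : Set Ordinal := {ξ | ¬ ∃ G ∈ B0, ∀ η (_ : η < ξ), chainSeq B0 η ⊂ G} with hSdef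
  have hSne : S.Nonempty := exists_stall B0
  set o₁ := Ordinal.lt_wf.min S hSne with ho₁def
  have ho₁S : o₁ ∈ S := Ordinal.lt_wf.min_mem S hSne
  have hbelow : ∀ ξ, ξ < o₁ → ∃ G ∈ B0, ∀ η (_ : η < ξ), chainSeq B0 η ⊂ G := by
    intro ξ hξ
    by_contra hc
    exact Ordinal.lt_wf.not_lt_min S hc hξ
  have he0 : ∀ ξ, ξ < o₁ →
      chainSeq B0 ξ ∈ B0 ∧ ∀ η (_ : η < ξ), chainSeq B0 η ⊂ chainSeq B0 ξ := by
    intro ξ hξ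
    have hex := hbelow ξ hξ
    rw [chainSeq_def B0 ξ, dif_pos hex]
    exact ⟨hex.choose_spec.1, hex.choose_spec.2⟩
  have ho₁lim : Order.IsSuccLimit o₁ := by
    rcases Ordinal.zero_or_succ_or_isSuccLimit o₁ with h0 | ⟨σ, hσ⟩ | hl
    · exfalso
      obtain ⟨F, hF⟩ := hB0ne
      exact ho₁S ⟨F, hF, fun η hη => (not_lt_of_ge (zero_le : (0 : Ordinal) ≤ η) (h0 ▸ hη : η < 0)).elim⟩
    · exfalso
      have hσlt : σ < o₁ := hσ ▸ Order.lt_succ σ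
      obtain ⟨G, hG, hGn⟩ := hnotop _ (he0 σ hσlt).1
      have hss : chainSeq B0 σ ⊂ G := by
        have hne : chainSeq B0 σ ≠ G := fun he => hGn (he ▸ subset_rfl)
        rcases hB0chain (he0 σ hσlt).1 hG hne with hsub | hsub
        · exact ⟨hsub, fun hGs => hGn hGs⟩
        · exact (hGn hsub).elim
      refine ho₁S ⟨G, hG, ?_⟩
      intro η hη
      rw [← hσ] at hη
      rcases (Order.lt_succ_iff.mp hη).lt_or_eq with hlt | rfl
      · exact ((he0 σ hσlt).2 η hlt).trans hss
      · exact hss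
    · exact hl
  have hcof0 : ∀ F ∈ B0, ∃ ξ, ξ < o₁ ∧ F ⊆ chainSeq B0 ξ := by
    intro F hF
    by_contra hnc
    push_neg at hnc
    refine ho₁S ⟨F, hF, ?_⟩
    intro η hη
    have hns := hnc η hη
    have hne : chainSeq B0 η ≠ F := fun he => hns (he ▸ subset_rfl)
    rcases hB0chain (he0 η hη).1 hF hne with hsub | hsub
    · exact ⟨hsub, fun hFs => hns hFs⟩
    · exact (hns hsub).elim
  -- regularized cofinal reindexing
  have hκinf : Cardinal.aleph0 ≤ o₁.cof := Ordinal.aleph0_le_cof.2 ho₁lim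
  set o := o₁.cof.ord with hodef
  obtain ⟨f, hf⟩ := Ordinal.exists_fundamental_sequence o₁
  have holim : Order.IsSuccLimit o := Cardinal.isSuccLimit_ord hκinf
  have hcofo : o.cof = o₁.cof := Ordinal.cof_cof o₁
  have hflt : ∀ ξ (hξ : ξ < o), f ξ hξ < o₁ :=
    fun ξ hξ => hf.blsub_eq ▸ Ordinal.lt_blsub f ξ hξ
  set e : Ordinal → Set (X × X) := fun ξ =>
    if hξ : ξ < o then
      chainSeq B0 (f ξ hξ) ∪ {p : X × X | (p.2, p.1) ∈ chainSeq B0 (f ξ hξ)}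
    else ∅ with hedef
  have heval : ∀ ξ (hξ : ξ < o), e ξ =
      chainSeq B0 (f ξ hξ) ∪ {p : X × X | (p.2, p.1) ∈ chainSeq B0 (f ξ hξ)} := by
    intro ξ hξ
    rw [hedef]
    exact dif_pos hξ
  have hemem : ∀ ξ (hξ : ξ < o), e ξ ∈ C.sets := by
    intro ξ hξ
    rw [heval ξ hξ]
    exact cs_union_mem C (hB0sub (he0 _ (hflt ξ hξ)).1)
      (C.inv_mem _ (hB0sub (he0 _ (hflt ξ hξ)).1))
  have hemono : ∀ η ξ, η ≤ ξ → ∀ (hξ : ξ < o), e η ⊆ e ξ := by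
    intro η ξ hle hξ
    have hηo : η < o := lt_of_le_of_lt hle hξ
    rw [heval η hηo, heval ξ hξ]
    rcases hle.lt_or_eq with hlt | rfl
    · have hffs : f η hηo < f ξ hξ := hf.2.1 hηo hξ hlt
      have hsub : chainSeq B0 (f η hηo) ⊆ chainSeq B0 (f ξ hξ) :=
        ((he0 _ (hflt ξ hξ)).2 _ hffs).subset
      exact Set.union_subset_union hsub (fun p hp => hsub hp)
    · exact subset_rfl
  have hecof : ∀ E ∈ C.sets, ∃ ξ, ∃ _ : ξ < o, E ⊆ e ξ := by
    intro E hE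
    obtain ⟨F, hF, hEF⟩ := hB0base E hE
    obtain ⟨ξ₁, hξ₁, hFe⟩ := hcof0 F hF
    have hξb : ξ₁ < Ordinal.blsub o₁.cof.ord f := by rw [hf.blsub_eq]; exact hξ₁
    obtain ⟨i, hi, hle⟩ := Ordinal.lt_blsub_iff.mp hξb
    refine ⟨i, hi, ?_⟩
    rw [heval i hi]
    refine fun p hp => Or.inl ?_
    have h1 : chainSeq B0 ξ₁ ⊆ chainSeq B0 (f i hi) := by
      rcases hle.lt_or_eq with hlt | he
      · exact ((he0 _ (hflt i hi)).2 _ hlt).subset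
      · exact he ▸ subset_rfl
    exact h1 (hFe (hEF hp))
  -- any `< cof`-small set of points is bounded
  set x0 : X := Classical.arbitrary X with hx0
  have hsmall : ∀ ξ, ξ < o → ∀ g h' : Ordinal → X,
      C.IsBounded {z | ∃ η, ∃ _ : η < ξ, z = g η ∨ z = h' η} := by
    intro ξ hξ g h'
    have hpt : ∀ z : X, ∃ γ, ∃ _ : γ < o, (x0, z) ∈ e γ := by
      intro z
      obtain ⟨E, hE, hmem⟩ := C.cover (x0, z)
      obtain ⟨γ, hγ, hsub⟩ := hecof E hE
      exact ⟨γ, hγ, hsub hmem⟩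
    choose γ hγlt hγmem using hpt
    set F2 : ∀ η < ξ, Ordinal := fun η _ => max (γ (g η)) (γ (h' η)) with hF2
    have hFlt : ∀ η (hη : η < ξ), F2 η hη < o := by
      intro η hη
      simp only [hF2]
      exact max_lt (hγlt _) (hγlt _)
    have hbs : Ordinal.bsup ξ F2 < o :=
      Ordinal.bsup_lt_ord (by rw [hcofo]; exact Cardinal.lt_ord.mp hξ) hFlt
    refine ⟨e (Ordinal.bsup ξ F2), hemem _ hbs, x0, ?_⟩
    rintro z ⟨η, hη, hz⟩
    have hγle : γ z ≤ F2 η hη := by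
      simp only [hF2]
      rcases hz with rfl | rfl
      · exact le_max_left _ _
      · exact le_max_right _ _
    exact ⟨x0, rfl, hemono _ _ (hγle.trans (Ordinal.le_bsup F2 η hη)) hbs (hγmem z)⟩
  -- the transfinite sequence of pairs
  have hstage : ∀ (q : Ordinal → X × X) ξ, ξ < o →
      ∃ p : X × X, p ∈ F' ∧ p ∉ e ξ ∧
        p.1 ∉ CoarseStruct.ball (e ξ) (pts q ξ) ∧
        p.2 ∉ CoarseStruct.ball (e ξ) (pts q ξ) := by
    intro q ξ hξ
    have hDb : C.IsBounded (CoarseStruct.ball (e ξ) (pts q ξ)) :=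
      cs_bounded_ball C (hsmall ξ hξ (fun η => (q η).1) (fun η => (q η).2)) (hemem ξ hξ)
    obtain ⟨p, hpF, h1, h2, h3⟩ := hconc _ hDb _ (hemem ξ hξ)
    exact ⟨p, hpF, h3, h1, h2⟩
  set q := pairSeq F' e with hqdef
  have hq : ∀ ξ, ξ < o → q ξ ∈ F' ∧ q ξ ∉ e ξ ∧
      (q ξ).1 ∉ CoarseStruct.ball (e ξ) (pts q ξ) ∧
      (q ξ).2 ∉ CoarseStruct.ball (e ξ) (pts q ξ) := by
    intro ξ hξ
    exact pairSeq_spec F' e ξ (hstage q ξ hξ)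
  set A : Set X := {z | ∃ ξ, ∃ _ : ξ < o, z = (q ξ).1} with hAdef
  set B : Set X := {z | ∃ ξ, ∃ _ : ξ < o, z = (q ξ).2} with hBdef
  have hmempts : ∀ η ξ : Ordinal, η < ξ → (q η).1 ∈ pts q ξ ∧ (q η).2 ∈ pts q ξ :=
    fun η ξ hlt => ⟨⟨η, hlt, Or.inl rfl⟩, ⟨η, hlt, Or.inr rfl⟩⟩
  have h0o : (0 : Ordinal) < o := holim.pos
  -- both coordinate sets are unbounded
  have hAunb : ¬ C.IsBounded A := by
    rintro ⟨G, hG, x, hsub⟩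
    obtain ⟨τ, hτ, hGe⟩ := hecof _ (C.comp_mem _ (C.inv_mem G hG) G hG)
    have hξo : Order.succ τ < o := holim.succ_lt hτ
    have h1 : (x, (q 0).1) ∈ G := cs_ball_singleton (hsub ⟨0, h0o, rfl⟩)
    have h2 : (x, (q (Order.succ τ)).1) ∈ G :=
      cs_ball_singleton (hsub ⟨_, hξo, rfl⟩)
    have hpair : ((q 0).1, (q (Order.succ τ)).1) ∈ e (Order.succ τ) :=
      hemono τ (Order.succ τ) (Order.le_succ τ) hξo
        (hGe ⟨x, show (x, (q 0).1) ∈ G from h1, h2⟩)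
    exact (hq _ hξo).2.2.1 ⟨(q 0).1,
      (hmempts 0 _ (lt_of_le_of_lt (zero_le : (0 : Ordinal) ≤ τ) (Order.lt_succ τ))).1, hpair⟩
  have hBunb : ¬ C.IsBounded B := by
    rintro ⟨G, hG, x, hsub⟩
    obtain ⟨τ, hτ, hGe⟩ := hecof _ (C.comp_mem _ (C.inv_mem G hG) G hG)
    have hξo : Order.succ τ < o := holim.succ_lt hτ
    have h1 : (x, (q 0).2) ∈ G := cs_ball_singleton (hsub ⟨0, h0o, rfl⟩)
    have h2 : (x, (q (Order.succ τ)).2) ∈ G :=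
      cs_ball_singleton (hsub ⟨_, hξo, rfl⟩)
    have hpair : ((q 0).2, (q (Order.succ τ)).2) ∈ e (Order.succ τ) :=
      hemono τ (Order.succ τ) (Order.le_succ τ) hξo
        (hGe ⟨x, show (x, (q 0).2) ∈ G from h1, h2⟩)
    exact (hq _ hξo).2.2.2 ⟨(q 0).2,
      (hmempts 0 _ (lt_of_le_of_lt (zero_le : (0 : Ordinal) ≤ τ) (Order.lt_succ τ))).2, hpair⟩
  -- A and B are close in C'
  have hcloseC' : C'.Close A B := by
    refine ⟨F', hF'C', ?_, ?_⟩
    · rintro z ⟨ξ, hξ, rfl⟩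
      exact ⟨(q ξ).2, ⟨ξ, hξ, rfl⟩, hF'sym _ (hq ξ hξ).1⟩
    · rintro z ⟨ξ, hξ, rfl⟩
      exact ⟨(q ξ).1, ⟨ξ, hξ, rfl⟩, (hq ξ hξ).1⟩
  have hLC : C.Linked A B := (hEq A B).mpr (Or.inr ⟨A, B, subset_rfl, subset_rfl,
    fun hb => hAunb ((hcb A).mpr hb), fun hb => hBunb ((hcb B).mpr hb), hcloseC'⟩)
  rcases hLC with ⟨hbA, -⟩ | ⟨A', B', hA'A, hB'B, hA'unb, hB'unb, E, hE, hcl1, hcl2⟩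
  · exact hAunb hbA
  -- final contradiction
  set Ebar : Set (X × X) := E ∪ {p : X × X | (p.2, p.1) ∈ E} with hEbardef
  have hEbarmem : Ebar ∈ C.sets := cs_union_mem C hE (C.inv_mem E hE)
  have hEbarsym : ∀ p : X × X, p ∈ Ebar → (p.2, p.1) ∈ Ebar := by
    rintro ⟨u, v⟩ (hp | hp)
    · exact Or.inr hp
    · exact Or.inl hp
  obtain ⟨μ, hμ, hEe⟩ := hecof Ebar hEbarmem
  have hμs : Order.succ μ < o := holim.succ_lt hμ
  have hSbd : C.IsBounded
      {z | ∃ η, ∃ _ : η < Order.succ μ, z = (q η).1 ∨ z = (q η).1} :=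
    hsmall _ hμs _ _
  have hex : ∃ a ∈ A',
      a ∉ {z | ∃ η, ∃ _ : η < Order.succ μ, z = (q η).1 ∨ z = (q η).1} := by
    by_contra hcon2
    push_neg at hcon2
    exact hA'unb (cs_bounded_subset C hSbd hcon2)
  obtain ⟨a, haA', haS⟩ := hex
  obtain ⟨b, hbB', hba⟩ := hcl1 haA'
  obtain ⟨ξ, hξo, rfl⟩ := hA'A haA'
  have hμξ : μ < ξ := by
    by_contra hc
    push_neg at hc
    exact haS ⟨ξ, Order.lt_succ_iff.mpr hc, Or.inl rfl⟩
  have hbaE : (b, (q ξ).1) ∈ Ebar := Or.inl hba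
  obtain ⟨η, hηo, rfl⟩ := hB'B hbB'
  rcases lt_trichotomy η ξ with hlt | rfl | hgt
  · exact (hq ξ hξo).2.2.1 ⟨(q η).2, (hmempts η ξ hlt).2,
      hemono μ ξ hμξ.le hξo (hEe hbaE)⟩
  · exact (hq η hξo).2.1 (hemono μ η hμξ.le hξo (hEe (hEbarsym _ hbaE)))
  · exact (hq η hηo).2.2.2 ⟨(q ξ).1, (hmempts ξ η hgt).1,
      hemono μ η (hμξ.trans hgt).le hηo (hEe (hEbarsym _ hbaE))⟩
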